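/- For each n ≥ 1 let p_n be a probability measure on the symmetric group S_n that is invariant under conjugation, and assume p_n({σ : σ(1)=1}) → 0 as n → ∞. Let u_n denote the uniform probability measure on S_n. Then for every finite set A of positive integers, p_n({σ : A ⊆ D(σ)}) − u_n({σ : A ⊆ D(σ)}) → 0 as n → ∞. -/

import Mathlib

noncomputable section

/-- `i ∈ D(σ)` for 1-based `i ∈ {1,…,n−1}`: `σ(i+1) < σ(i)`
(positions `i`, `i+1` are the 0-based indices `i−1`, `i`). -/
def descentAt {n : ℕ} (σ : Equiv.Perm (Fin n)) (i : ℕ) : Prop :=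
  ∃ (h1 : i - 1 < n) (h2 : i < n), σ ⟨i, h2⟩ < σ ⟨i - 1, h1⟩

/-- The probability of the event `P` under the probability mass function `p` on `S_n`. -/
def permProb {n : ℕ} (p : Equiv.Perm (Fin n) → ℝ) (P : Equiv.Perm (Fin n) → Prop) : ℝ :=
  ∑ σ, Set.indicator {σ' | P σ'} p σ

open Finset Equiv

lemma permProb_eq {n} (p : Equiv.Perm (Fin n) → ℝ) (P : Equiv.Perm (Fin n) → Prop)
    [DecidablePred P] :
    permProb p P = ∑ σ, if P σ then p σ else 0 := by
  unfold permProb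
  refine Finset.sum_congr rfl fun σ _ => ?_
  rw [Set.indicator_apply]
  exact if_congr Iff.rfl rfl rfl

open Classical

lemma permProb_congr {n} (p : Equiv.Perm (Fin n) → ℝ) {P Q : Equiv.Perm (Fin n) → Prop}
    (h : ∀ σ, P σ ↔ Q σ) : permProb p P = permProb p Q := by
  simp only [permProb_eq]
  exact Finset.sum_congr rfl fun σ _ => by rw [if_congr (h σ) rfl rfl]

lemma permProb_nonneg {n} {p : Equiv.Perm (Fin n) → ℝ} (hp : ∀ σ, 0 ≤ p σ)
    (P : Equiv.Perm (Fin n) → Prop) : 0 ≤ permProb p P := by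
  rw [permProb_eq]
  exact Finset.sum_nonneg fun σ _ => by split <;> simp [hp σ]

lemma permProb_mono {n} {p : Equiv.Perm (Fin n) → ℝ} (hp : ∀ σ, 0 ≤ p σ)
    {P Q : Equiv.Perm (Fin n) → Prop} (h : ∀ σ, P σ → Q σ) :
    permProb p P ≤ permProb p Q := by
  simp only [permProb_eq]
  refine Finset.sum_le_sum fun σ _ => ?_
  by_cases hP : P σ
  · rw [if_pos hP, if_pos (h σ hP)]
  · rw [if_neg hP]; split <;> simp [hp σ]

lemma permProb_add_compl {n} {p : Equiv.Perm (Fin n) → ℝ} (hs : ∑ σ, p σ = 1)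
    (P : Equiv.Perm (Fin n) → Prop) :
    permProb p P + permProb p (fun σ => ¬ P σ) = 1 := by
  simp only [permProb_eq, ← Finset.sum_add_distrib]
  rw [← hs]
  refine Finset.sum_congr rfl fun σ _ => ?_
  by_cases hP : P σ <;> simp [hP]

lemma permProb_reindex {n} (p : Equiv.Perm (Fin n) → ℝ)
    (e : Equiv.Perm (Fin n) ≃ Equiv.Perm (Fin n)) (hp : ∀ σ, p (e σ) = p σ)
    (P : Equiv.Perm (Fin n) → Prop) :
    permProb p P = permProb p (fun σ => P (e σ)) := by
  simp only [permProb_eq]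
  rw [← Equiv.sum_comp e (fun τ => if P τ then p τ else 0)]
  exact Finset.sum_congr rfl fun σ _ => by rw [hp σ]

lemma permProb_conj {n} {p : Equiv.Perm (Fin n) → ℝ}
    (hinv : ∀ σ ρ : Equiv.Perm (Fin n), p (ρ⁻¹ * σ * ρ) = p σ)
    (ρ : Equiv.Perm (Fin n)) (P : Equiv.Perm (Fin n) → Prop) :
    permProb p P = permProb p (fun σ => P (ρ * σ * ρ⁻¹)) := by
  refine permProb_reindex p ((Equiv.mulLeft ρ).trans (Equiv.mulRight ρ⁻¹)) (fun σ => ?_) P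
  have := hinv σ ρ⁻¹
  simpa using this

lemma permProb_partition {n} (p : Equiv.Perm (Fin n) → ℝ) (x : Fin n) :
    ∑ y, permProb p (fun σ => σ x = y) = ∑ σ, p σ := by
  simp only [permProb_eq]
  rw [Finset.sum_comm]
  refine Finset.sum_congr rfl fun σ _ => ?_
  exact (Finset.sum_eq_single (σ x) (fun y _ hy => if_neg fun h => hy h.symm)
    (fun h => absurd (Finset.mem_univ _) h)).trans (if_pos rfl)

lemma exists_perm_extend {α : Type*} [Fintype α] [DecidableEq α] (D : Finset α)
    (h : α → α) (hinj : Set.InjOn h D) :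
    ∃ ρ : Equiv.Perm α, ∀ x ∈ D, ρ x = h x := by
  classical
  set D' : Finset α := D.image h with hD'
  have hcard : D'.card = D.card := Finset.card_image_of_injOn hinj
  have hcc : Fintype.card ↥(Dᶜ : Finset α) = Fintype.card ↥(D'ᶜ : Finset α) := by
    simp [Finset.card_compl, hcard]
  let e : ↥(Dᶜ : Finset α) ≃ ↥(D'ᶜ : Finset α) := Fintype.equivOfCardEq hcc
  let F : α → α := fun x => if hx : x ∈ D then h x else
    (e ⟨x, by simp [Finset.mem_compl, hx]⟩ : α)
  have hFD : ∀ x ∈ D, F x = h x := fun x hx => dif_pos hx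
  have hmemD : ∀ x, x ∈ D → F x ∈ D' := fun x hx => by
    rw [hFD x hx]; exact Finset.mem_image_of_mem h hx
  have hmemC : ∀ x (hx : x ∉ D), F x ∉ D' := by
    intro x hx
    have : F x = (e ⟨x, by simp [Finset.mem_compl, hx]⟩ : α) := dif_neg hx
    rw [this]
    exact Finset.mem_compl.mp (e ⟨x, by simp [Finset.mem_compl, hx]⟩).2
  have hFinj : Function.Injective F := by
    intro a b hab
    by_cases ha : a ∈ D <;> by_cases hb : b ∈ D
    · exact hinj ha hb (by rwa [hFD a ha, hFD b hb] at hab)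
    · exact absurd (hab ▸ hmemD a ha) (hmemC b hb)
    · exact absurd (hab.symm ▸ hmemD b hb) (hmemC a ha)
    · have : (e ⟨a, by simp [Finset.mem_compl, ha]⟩ : α)
          = (e ⟨b, by simp [Finset.mem_compl, hb]⟩ : α) := by
        simpa [F, dif_neg ha, dif_neg hb] using hab
      have := e.injective (Subtype.ext this)
      exact Subtype.mk_eq_mk.mp this
  refine ⟨Equiv.ofBijective F (Finite.injective_iff_bijective.mp hFinj), hFD⟩

lemma exists_rho {n : ℕ} (W : Finset (Fin n)) (t t' : ↥W → Fin n)
    (ht : Function.Injective t) (ht' : Function.Injective t')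
    (hW : ∀ x, t x ∉ W) (hW' : ∀ x, t' x ∉ W) :
    ∃ ρ : Equiv.Perm (Fin n), (∀ x : ↥W, ρ x = x) ∧ ∀ x, ρ (t x) = t' x := by
  classical
  by_cases hne : Nonempty ↥W
  · set I : Finset (Fin n) := Finset.univ.image t with hI
    set h : Fin n → Fin n := fun y => if y ∈ I then t' (Function.invFun t y) else y with hh
    have hdisj : ∀ y ∈ I, y ∉ W := by
      intro y hy
      obtain ⟨x, _, rfl⟩ := Finset.mem_image.mp hy
      exact hW x
    have hht : ∀ x : ↥W, h (t x) = t' x := by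
      intro x
      have : t x ∈ I := Finset.mem_image_of_mem t (Finset.mem_univ x)
      rw [hh]; simp only [if_pos this]
      rw [Function.leftInverse_invFun ht x]
    have hhW : ∀ y ∈ W, h y = y := by
      intro y hy
      have : y ∉ I := fun hyI => hdisj y hyI hy
      simp [hh, this]
    have hinj : Set.InjOn h (W ∪ I : Finset (Fin n)) := by
      intro a ha b hb hab
      simp only [Finset.coe_union, Set.mem_union, Finset.mem_coe] at ha hb
      have hval : ∀ c, c ∈ I → h c ∉ W := by
        intro c hc
        obtain ⟨x, _, rfl⟩ := Finset.mem_image.mp hc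
        rw [hht x]; exact hW' x
      rcases ha with ha | ha <;> rcases hb with hb | hb
      · rwa [hhW a ha, hhW b hb] at hab
      · have hbW : h b ∈ W := by rw [← hab, hhW a ha]; exact ha
        exact absurd hbW (hval b hb)
      · have haW : h a ∈ W := by rw [hab, hhW b hb]; exact hb
        exact absurd haW (hval a ha)
      · obtain ⟨x, _, rfl⟩ := Finset.mem_image.mp ha
        obtain ⟨x₂, _, rfl⟩ := Finset.mem_image.mp hb
        rw [hht x, hht x₂] at hab
        rw [ht' hab]
    obtain ⟨ρ, hρ⟩ := exists_perm_extend (W ∪ I) h hinj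
    refine ⟨ρ, fun x => ?_, fun x => ?_⟩
    · rw [hρ x (Finset.mem_union_left _ x.2), hhW x x.2]
    · rw [hρ (t x) (Finset.mem_union_right _ (Finset.mem_image_of_mem t (Finset.mem_univ x))),
        hht x]
  · exact ⟨1, fun x => absurd ⟨x⟩ hne, fun x => absurd ⟨x⟩ hne⟩

lemma fib_const {n : ℕ} {p : Equiv.Perm (Fin n) → ℝ}
    (hinv : ∀ σ ρ : Equiv.Perm (Fin n), p (ρ⁻¹ * σ * ρ) = p σ)
    (W : Finset (Fin n)) (t t' : ↥W → Fin n)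
    (ht : Function.Injective t) (ht' : Function.Injective t')
    (hW : ∀ x, t x ∉ W) (hW' : ∀ x, t' x ∉ W) :
    permProb p (fun σ => ∀ x : ↥W, σ x = t x)
      = permProb p (fun σ => ∀ x : ↥W, σ x = t' x) := by
  obtain ⟨ρ, hρW, hρt⟩ := exists_rho W t t' ht ht' hW hW'
  have hρinv : ∀ x : ↥W, ρ⁻¹ (x : Fin n) = x := by
    intro x
    have := hρW x
    exact ρ.injective (by rw [Equiv.Perm.coe_inv, Equiv.apply_symm_apply, this])
  rw [permProb_conj hinv ρ (fun σ => ∀ x : ↥W, σ x = t' x)]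
  refine permProb_congr p fun σ => ?_
  constructor
  · intro hσ x
    have : (ρ * σ * ρ⁻¹) (x : Fin n) = ρ (σ (ρ⁻¹ x)) := rfl
    rw [this, hρinv x, hσ x, hρt x]
  · intro hσ x
    have h1 : (ρ * σ * ρ⁻¹) (x : Fin n) = ρ (σ (ρ⁻¹ x)) := rfl
    have := hσ x
    rw [h1, hρinv x, ← hρt x] at this
    exact ρ.injective this

lemma permProb_fiber {n : ℕ} (p : Equiv.Perm (Fin n) → ℝ) (W : Finset (Fin n))
    (P : Equiv.Perm (Fin n) → Prop) :
    permProb p P = ∑ t : ↥W → Fin n,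
      permProb p (fun σ => P σ ∧ ∀ x : ↥W, σ x = t x) := by
  simp only [permProb_eq]
  rw [Finset.sum_comm]
  refine Finset.sum_congr rfl fun σ _ => ?_
  refine ((Finset.sum_eq_single (fun x : ↥W => σ x) ?_ ?_).trans ?_).symm
  · intro t _ hne
    refine if_neg fun hc => hne ?_
    exact funext fun x => (hc.2 x).symm
  · exact fun habs => absurd (Finset.mem_univ _) habs
  · by_cases hP : P σ
    · rw [if_pos ⟨hP, fun _ => rfl⟩, if_pos hP]
    · rw [if_neg (fun hc => hP hc.1), if_neg hP]

open Classical in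
lemma permProb_select {n : ℕ} (p : Equiv.Perm (Fin n) → ℝ) (W : Finset (Fin n))
    (P : Equiv.Perm (Fin n) → Prop) (t : ↥W → Fin n) (Q : Prop) [Decidable Q]
    (hPt : ∀ σ : Equiv.Perm (Fin n), (∀ x : ↥W, σ x = t x) → (P σ ↔ Q)) :
    permProb p (fun σ => P σ ∧ ∀ x : ↥W, σ x = t x)
      = if Q then permProb p (fun σ => ∀ x : ↥W, σ x = t x) else 0 := by
  by_cases hQ : Q
  · rw [if_pos hQ]
    refine permProb_congr p fun σ => ?_
    constructor
    · exact fun h => h.2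
    · exact fun h => ⟨(hPt σ h).mpr hQ, h⟩
  · rw [if_neg hQ]
    have : permProb p (fun σ => P σ ∧ ∀ x : ↥W, σ x = t x)
        = permProb p (fun _ => False) := by
      refine permProb_congr p fun σ => ?_
      simp only [iff_false]
      exact fun hc => hQ ((hPt σ hc.2).mp hc.1)
    rw [this, permProb_eq]
    simp

lemma sum_const_subset_abs {ι : Type*} [DecidableEq ι] {s s' : Finset ι} (hss : s ⊆ s')
    (f : ι → ℝ) (hconst : ∀ a ∈ s', ∀ b ∈ s', f a = f b) :
    |∑ a ∈ s, f a| ≤ |∑ a ∈ s', f a| := by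
  rcases s'.eq_empty_or_nonempty with rfl | ⟨b, hb⟩
  · rw [Finset.subset_empty.mp hss]
  · have h1 : ∑ a ∈ s, f a = s.card * f b := by
      rw [Finset.sum_congr rfl (fun a ha => hconst a (hss ha) b hb), Finset.sum_const,
        nsmul_eq_mul]
    have h2 : ∑ a ∈ s', f a = s'.card * f b := by
      rw [Finset.sum_congr rfl (fun a ha => hconst a ha b hb), Finset.sum_const, nsmul_eq_mul]
    rw [h1, h2, abs_mul, abs_mul]
    have : |(s.card : ℝ)| ≤ |(s'.card : ℝ)| := by
      simp only [Nat.abs_cast]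
      exact_mod_cast Finset.card_le_card hss
    exact mul_le_mul_of_nonneg_right this (abs_nonneg _)

lemma permProb_split {n : ℕ} (p : Equiv.Perm (Fin n) → ℝ)
    (P Q : Equiv.Perm (Fin n) → Prop) :
    permProb p P = permProb p (fun σ => P σ ∧ Q σ) + permProb p (fun σ => P σ ∧ ¬ Q σ) := by
  simp only [permProb_eq, ← Finset.sum_add_distrib]
  refine Finset.sum_congr rfl fun σ _ => ?_
  by_cases hP : P σ <;> by_cases hQ : Q σ <;> simp [hP, hQ]

open Classical in
lemma key_bound {n : ℕ} {p q : Equiv.Perm (Fin n) → ℝ}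
    (hp0 : ∀ σ, 0 ≤ p σ) (hq0 : ∀ σ, 0 ≤ q σ)
    (hps : ∑ σ, p σ = 1) (hqs : ∑ σ, q σ = 1)
    (hpinv : ∀ σ ρ : Equiv.Perm (Fin n), p (ρ⁻¹*σ*ρ) = p σ)
    (hqinv : ∀ σ ρ : Equiv.Perm (Fin n), q (ρ⁻¹*σ*ρ) = q σ)
    (W : Finset (Fin n)) (E : Equiv.Perm (Fin n) → Prop)
    (hE : ∀ σ τ : Equiv.Perm (Fin n), (∀ x : ↥W, σ x = τ x) → E σ → E τ) :
    |permProb p E - permProb q E|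
      ≤ 2 * (permProb p (fun σ => ¬ ∀ x ∈ W, σ x ∉ W)
           + permProb q (fun σ => ¬ ∀ x ∈ W, σ x ∉ W)) := by
  set G : Equiv.Perm (Fin n) → Prop := fun σ => ∀ x ∈ W, σ x ∉ W with hGdef
  set Et : (↥W → Fin n) → Prop :=
    fun t => ∀ σ : Equiv.Perm (Fin n), (∀ x : ↥W, σ x = t x) → E σ with hEtdef
  set Gt : (↥W → Fin n) → Prop :=
    fun t => Function.Injective t ∧ ∀ x : ↥W, t x ∉ W with hGtdef
  have hiffG : ∀ (t : ↥W → Fin n) (σ : Equiv.Perm (Fin n)),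
      (∀ x : ↥W, σ x = t x) → (G σ ↔ Gt t) := by
    intro t σ hm
    constructor
    · intro hGσ
      refine ⟨fun x y hxy => ?_, fun x => ?_⟩
      · rw [← hm x, ← hm y] at hxy
        exact Subtype.ext (σ.injective hxy)
      · rw [← hm x]; exact hGσ x x.2
    · intro hGt x hx
      have := hm ⟨x, hx⟩
      rw [this]
      exact hGt.2 ⟨x, hx⟩
  have hiffEG : ∀ (t : ↥W → Fin n) (σ : Equiv.Perm (Fin n)),
      (∀ x : ↥W, σ x = t x) → ((E σ ∧ G σ) ↔ (Et t ∧ Gt t)) := by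
    intro t σ hm
    constructor
    · intro ⟨hEσ, hGσ⟩
      refine ⟨fun τ hτ => hE σ τ (fun x => by rw [hm x, hτ x]) hEσ, (hiffG t σ hm).mp hGσ⟩
    · intro ⟨hEt, hGt⟩
      exact ⟨hEt σ hm, (hiffG t σ hm).mpr hGt⟩
  set TE : Finset (↥W → Fin n) := Finset.univ.filter (fun t => (Et t ∧ Gt t)) with hTE
  set TG : Finset (↥W → Fin n) := Finset.univ.filter Gt with hTG
  have hdecomp : ∀ (r : Equiv.Perm (Fin n) → ℝ),
      permProb r (fun σ => E σ ∧ G σ)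
        = ∑ t ∈ TE, permProb r (fun σ => ∀ x : ↥W, σ x = t x) := by
    intro r
    rw [permProb_fiber r W (fun σ => E σ ∧ G σ), hTE, Finset.sum_filter]
    refine Finset.sum_congr rfl fun t _ => ?_
    exact permProb_select r W _ t _ (fun σ hm => hiffEG t σ hm)
  have hdecompG : ∀ (r : Equiv.Perm (Fin n) → ℝ),
      permProb r G = ∑ t ∈ TG, permProb r (fun σ => ∀ x : ↥W, σ x = t x) := by
    intro r
    rw [permProb_fiber r W G, hTG, Finset.sum_filter]
    refine Finset.sum_congr rfl fun t _ => ?_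
    exact permProb_select r W _ t _ (fun σ hm => hiffG t σ hm)
  have hsub : TE ⊆ TG := by
    intro t ht
    simp only [hTE, hTG, Finset.mem_filter] at *
    exact ⟨ht.1, ht.2.2⟩
  have hconst : ∀ a ∈ TG, ∀ b ∈ TG,
      (permProb p (fun σ => ∀ x : ↥W, σ x = a x) - permProb q (fun σ => ∀ x : ↥W, σ x = a x))
      = (permProb p (fun σ => ∀ x : ↥W, σ x = b x)
          - permProb q (fun σ => ∀ x : ↥W, σ x = b x)) := by
    intro a ha b hb
    simp only [hTG, Finset.mem_filter] at ha hb
    rw [fib_const hpinv W a b ha.2.1 hb.2.1 ha.2.2 hb.2.2,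
      fib_const hqinv W a b ha.2.1 hb.2.1 ha.2.2 hb.2.2]
  have h1 : |permProb p (fun σ => E σ ∧ G σ) - permProb q (fun σ => E σ ∧ G σ)|
      ≤ |permProb p G - permProb q G| := by
    rw [hdecomp p, hdecomp q, hdecompG p, hdecompG q, ← Finset.sum_sub_distrib,
      ← Finset.sum_sub_distrib]
    exact sum_const_subset_abs hsub _ hconst
  have hsplitp := permProb_split p E G
  have hsplitq := permProb_split q E G
  have hcomplp := permProb_add_compl hps G
  have hcomplq := permProb_add_compl hqs G
  have hmp : permProb p (fun σ => E σ ∧ ¬ G σ) ≤ permProb p (fun σ => ¬ G σ) :=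
    permProb_mono hp0 (fun σ h => h.2)
  have hmq : permProb q (fun σ => E σ ∧ ¬ G σ) ≤ permProb q (fun σ => ¬ G σ) :=
    permProb_mono hq0 (fun σ h => h.2)
  have hnnp : 0 ≤ permProb p (fun σ => E σ ∧ ¬ G σ) := permProb_nonneg hp0 _
  have hnnq : 0 ≤ permProb q (fun σ => E σ ∧ ¬ G σ) := permProb_nonneg hq0 _
  have h2 : |permProb p G - permProb q G|
      ≤ permProb p (fun σ => ¬ G σ) + permProb q (fun σ => ¬ G σ) := by
    have : permProb p G - permProb q G
        = permProb q (fun σ => ¬ G σ) - permProb p (fun σ => ¬ G σ) := by linarith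
    rw [this, abs_sub_comm]
    have h3 : 0 ≤ permProb p (fun σ => ¬ G σ) := permProb_nonneg hp0 _
    have h4 : 0 ≤ permProb q (fun σ => ¬ G σ) := permProb_nonneg hq0 _
    rw [abs_le]; constructor <;> linarith [abs_nonneg (permProb p (fun σ => ¬ G σ))]
  calc |permProb p E - permProb q E|
      = |(permProb p (fun σ => E σ ∧ G σ) - permProb q (fun σ => E σ ∧ G σ))
          + (permProb p (fun σ => E σ ∧ ¬ G σ) - permProb q (fun σ => E σ ∧ ¬ G σ))| := by
        rw [hsplitp, hsplitq]; ring_nf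
    _ ≤ |permProb p (fun σ => E σ ∧ G σ) - permProb q (fun σ => E σ ∧ G σ)|
          + |permProb p (fun σ => E σ ∧ ¬ G σ) - permProb q (fun σ => E σ ∧ ¬ G σ)| :=
        abs_add_le _ _
    _ ≤ 2 * (permProb p (fun σ => ¬ G σ) + permProb q (fun σ => ¬ G σ)) := by
        have h5 : |permProb p (fun σ => E σ ∧ ¬ G σ) - permProb q (fun σ => E σ ∧ ¬ G σ)|
            ≤ permProb p (fun σ => ¬ G σ) + permProb q (fun σ => ¬ G σ) := by
          rw [abs_le]; constructor <;> linarith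
        linarith [h1.trans h2]

open Classical in
lemma ite_nonneg' {c : Prop} [Decidable c] {a : ℝ} (ha : 0 ≤ a) : 0 ≤ if c then a else 0 := by
  by_cases h : c
  · rwa [if_pos h]
  · rw [if_neg h]

open Classical in
lemma union_bound {n : ℕ} {p : Equiv.Perm (Fin n) → ℝ} (hp0 : ∀ σ, 0 ≤ p σ)
    (W : Finset (Fin n)) :
    permProb p (fun σ => ¬ ∀ x ∈ W, σ x ∉ W)
      ≤ ∑ x ∈ W, ∑ y ∈ W, permProb p (fun σ => σ x = y) := by
  have step2 : ∀ x : Fin n, ∑ y ∈ W, permProb p (fun σ => σ x = y)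
      = permProb p (fun σ => σ x ∈ W) := by
    intro x
    simp only [permProb_eq]
    rw [Finset.sum_comm]
    refine Finset.sum_congr rfl fun σ _ => ?_
    by_cases hm : σ x ∈ W
    · rw [Finset.sum_eq_single_of_mem (σ x) hm (fun y _ hy => if_neg fun h => hy h.symm),
        if_pos rfl, if_pos hm]
    · rw [if_neg hm]
      refine Finset.sum_eq_zero fun y hy => if_neg fun (h : σ x = y) => hm (h.symm ▸ hy)
  rw [Finset.sum_congr rfl (fun x _ => step2 x)]
  simp only [permProb_eq]
  rw [Finset.sum_comm]
  refine Finset.sum_le_sum fun σ _ => ?_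
  by_cases hσ : ∀ x ∈ W, σ x ∉ W
  · rw [if_neg (fun hc => hc hσ)]
    exact Finset.sum_nonneg fun x _ => ite_nonneg' (hp0 σ)
  · rw [if_pos hσ]
    push_neg at hσ
    obtain ⟨x, hxW, hmem⟩ := hσ
    refine le_trans ?_ (Finset.single_le_sum (fun y _ => ite_nonneg' (hp0 σ)) hxW)
    rw [if_pos hmem]

lemma offdiag_bound {n : ℕ} {p : Equiv.Perm (Fin n) → ℝ} (hp0 : ∀ σ, 0 ≤ p σ)
    (hps : ∑ σ, p σ = 1)
    (hinv : ∀ σ ρ : Equiv.Perm (Fin n), p (ρ⁻¹*σ*ρ) = p σ)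
    {x y : Fin n} (hxy : x ≠ y) :
    permProb p (fun σ => σ x = y) ≤ ((n : ℝ) - 1)⁻¹ := by
  classical
  have hn : 2 ≤ n := by
    by_contra hc
    interval_cases n
    · exact absurd x.2 (by omega)
    · exact hxy (Subsingleton.elim x y)
  have hval : ∀ y' : Fin n, y' ≠ x → permProb p (fun σ => σ x = y')
      = permProb p (fun σ => σ x = y) := by
    intro y' hy'
    have h1 : ∀ z : Fin n, z ≠ x → permProb p (fun σ => σ x = z)
      = permProb p (fun σ => ∀ w : ↥({x} : Finset (Fin n)), σ w = z) := by
      intro z hz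
      refine permProb_congr p fun σ => ?_
      constructor
      · intro h w
        have : (w : Fin n) = x := Finset.mem_singleton.mp w.2
        rw [this, h]
      · intro h
        exact h ⟨x, Finset.mem_singleton_self x⟩
    rw [h1 y' hy', h1 y (fun h => hxy h.symm)]
    exact fib_const hinv ({x} : Finset (Fin n)) (fun _ => y') (fun _ => y)
      (Function.injective_of_subsingleton _) (Function.injective_of_subsingleton _)
      (fun _ => by simpa using hy') (fun _ => by simpa using fun h => hxy h.symm)
  have hsum1 : ∑ y', permProb p (fun σ => σ x = y') = 1 := by
    rw [permProb_partition p x, hps]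
  have hbig : ∑ y' ∈ Finset.univ.erase x, permProb p (fun σ => σ x = y') ≤ 1 := by
    rw [← hsum1]
    refine Finset.sum_le_sum_of_subset_of_nonneg (Finset.subset_univ _) ?_
    exact fun y' _ _ => permProb_nonneg hp0 _
  have hcount : ∑ y' ∈ Finset.univ.erase x, permProb p (fun σ => σ x = y')
      = ((n : ℝ) - 1) * permProb p (fun σ => σ x = y) := by
    rw [Finset.sum_congr rfl (fun y' hy' => hval y' (Finset.mem_erase.mp hy').1),
      Finset.sum_const, Finset.card_erase_of_mem (Finset.mem_univ x), Finset.card_univ,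
      Fintype.card_fin, nsmul_eq_mul]
    congr 1
    have : (1:ℕ) ≤ n := by omega
    push_cast [this]
    ring
  have hpos : (0:ℝ) < (n : ℝ) - 1 := by
    have : (2:ℝ) ≤ (n:ℝ) := by exact_mod_cast hn
    linarith
  rw [hcount] at hbig
  rw [← mul_le_mul_iff_right₀ hpos]
  calc ((n:ℝ)-1) * permProb p (fun σ => σ x = y) ≤ 1 := hbig
    _ = ((n:ℝ)-1) * ((n:ℝ)-1)⁻¹ := by field_simp

lemma diag_eq {n : ℕ} {p : Equiv.Perm (Fin n) → ℝ}
    (hinv : ∀ σ ρ : Equiv.Perm (Fin n), p (ρ⁻¹*σ*ρ) = p σ) (x : Fin n) :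
    permProb p (fun σ => σ x = x)
      = permProb p (fun σ => ∀ h : 0 < n, σ ⟨0, h⟩ = ⟨0, h⟩) := by
  classical
  have h0 : 0 < n := x.pos
  set z : Fin n := ⟨0, h0⟩ with hz
  set ρ : Equiv.Perm (Fin n) := Equiv.swap z x with hρ
  rw [permProb_conj hinv ρ (fun σ => σ x = x)]
  refine permProb_congr p fun σ => ?_
  have h1 : (ρ * σ * ρ⁻¹) x = ρ (σ z) := by
    have : ρ⁻¹ x = z := by rw [hρ, Equiv.swap_inv, Equiv.swap_apply_right]
    simp [Equiv.Perm.mul_apply, this]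
  constructor
  · intro hσ h
    have : (⟨0, h⟩ : Fin n) = z := rfl
    rw [this]
    have h2 : ρ (σ z) = x := by rw [← h1, hσ]
    have h3 : σ z = ρ⁻¹ x := by rw [← h2, Equiv.Perm.coe_inv, Equiv.symm_apply_apply]
    rw [h3, hρ, Equiv.swap_inv, Equiv.swap_apply_right]
  · intro hσ
    have h2 : σ z = z := hσ h0
    rw [h1, h2, hρ, Equiv.swap_apply_left]

lemma uniform_sum {n : ℕ} : ∑ _σ : Equiv.Perm (Fin n), ((n.factorial : ℝ))⁻¹ = 1 := by
  rw [Finset.sum_const, Finset.card_univ, Fintype.card_perm, Fintype.card_fin, nsmul_eq_mul]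
  rw [mul_inv_cancel₀]
  exact_mod_cast Nat.factorial_ne_zero n

lemma uniform_val {n : ℕ} (hn : 1 ≤ n) (x y : Fin n) :
    permProb (fun _ : Equiv.Perm (Fin n) => ((n.factorial : ℝ))⁻¹) (fun σ => σ x = y)
      = (n : ℝ)⁻¹ := by
  classical
  set u : Equiv.Perm (Fin n) → ℝ := fun _ => ((n.factorial : ℝ))⁻¹ with hu
  have hval : ∀ y' : Fin n, permProb u (fun σ => σ x = y')
      = permProb u (fun σ => σ x = y) := by
    intro y'
    rw [permProb_reindex u (Equiv.mulLeft (Equiv.swap y y')) (fun _ => rfl)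
      (fun σ => σ x = y)]
    refine permProb_congr u fun σ => ?_
    constructor
    · intro h
      show Equiv.swap y y' (σ x) = y
      rw [h, Equiv.swap_apply_right]
    · intro h
      have h' : Equiv.swap y y' (σ x) = y := h
      exact (Equiv.swap y y').injective (h'.trans (Equiv.swap_apply_right y y').symm)
  have hsum1 : ∑ y', permProb u (fun σ => σ x = y') = 1 := by
    rw [permProb_partition u x, uniform_sum]
  rw [Finset.sum_congr rfl (fun y' _ => hval y'), Finset.sum_const, Finset.card_univ,
    Fintype.card_fin, nsmul_eq_mul] at hsum1
  have hn0 : (0:ℝ) < (n:ℝ) := by exact_mod_cast hn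
  field_simp
  linarith [hsum1]

theorem stmt_14 (p : (n : ℕ) → Equiv.Perm (Fin n) → ℝ)
    (hpos : ∀ n, 1 ≤ n → ∀ σ, 0 ≤ p n σ)
    (hsum : ∀ n, 1 ≤ n → ∑ σ, p n σ = 1)
    (hinv : ∀ n, 1 ≤ n → ∀ σ ρ : Equiv.Perm (Fin n), p n (ρ⁻¹ * σ * ρ) = p n σ)
    (hfix : Filter.Tendsto
      (fun n => permProb (p n) (fun σ => ∀ h : 0 < n, σ ⟨0, h⟩ = ⟨0, h⟩))
      Filter.atTop (nhds 0)) :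
    ∀ A : Finset ℕ, (∀ a ∈ A, 1 ≤ a) →
      Filter.Tendsto (fun n =>
          permProb (p n) (fun σ => ∀ a ∈ A, descentAt σ a)
          - permProb (fun _ : Equiv.Perm (Fin n) => ((n.factorial : ℝ))⁻¹)
              (fun σ => ∀ a ∈ A, descentAt σ a))
        Filter.atTop (nhds 0) := by
  classical
  intro A hA
  set K : ℕ := 2 * A.card with hK
  set fix : ℕ → ℝ := fun n => permProb (p n) (fun σ => ∀ h : 0 < n, σ ⟨0, h⟩ = ⟨0, h⟩)
    with hfixdef
  set g : ℕ → ℝ := fun n =>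
    2 * ((K : ℝ) * (fix n + K * ((n:ℝ) - 1)⁻¹) + K * (K * (n:ℝ)⁻¹)) with hg
  have hgto : Filter.Tendsto g Filter.atTop (nhds 0) := by
    have h1 : Filter.Tendsto (fun n : ℕ => ((n:ℝ) - 1)⁻¹) Filter.atTop (nhds 0) := by
      refine Filter.Tendsto.inv_tendsto_atTop ?_
      have := Filter.tendsto_atTop_add_const_right Filter.atTop (-1 : ℝ)
        tendsto_natCast_atTop_atTop
      simpa [sub_eq_add_neg] using this
    have h2 : Filter.Tendsto (fun n : ℕ => ((n:ℝ))⁻¹) Filter.atTop (nhds 0) :=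
      Filter.Tendsto.inv_tendsto_atTop tendsto_natCast_atTop_atTop
    have := ((((hfix.add (h1.const_mul (K:ℝ))).const_mul (K:ℝ)).add
      ((h2.const_mul (K:ℝ)).const_mul (K:ℝ))).const_mul (2:ℝ))
    simpa [hg] using this
  refine squeeze_zero_norm' ?_ hgto
  filter_upwards [Filter.eventually_ge_atTop 2] with n hn
  have hn1 : 1 ≤ n := by omega
  have hp0 := hpos n hn1
  have hps := hsum n hn1
  have hpinv := hinv n hn1
  set u : Equiv.Perm (Fin n) → ℝ := fun _ => ((n.factorial : ℝ))⁻¹ with hu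
  have hq0 : ∀ σ, 0 ≤ u σ := fun σ => by
    rw [hu]; positivity
  have hqs : ∑ σ, u σ = 1 := uniform_sum
  have hqinv : ∀ σ ρ : Equiv.Perm (Fin n), u (ρ⁻¹ * σ * ρ) = u σ := fun _ _ => rfl
  set W : Finset (Fin n) := Finset.univ.filter (fun x => (x:ℕ) ∈ A ∨ (x:ℕ)+1 ∈ A) with hW
  set E : Equiv.Perm (Fin n) → Prop := fun σ => ∀ a ∈ A, descentAt σ a with hE
  -- E is determined by values on W
  have hEdet : ∀ σ τ : Equiv.Perm (Fin n), (∀ x : ↥W, σ x = τ x) → E σ → E τ := by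
    intro σ τ hag hEσ a haA
    obtain ⟨h1, h2, hlt⟩ := hEσ a haA
    refine ⟨h1, h2, ?_⟩
    have hm2 : (⟨a, h2⟩ : Fin n) ∈ W := by
      rw [hW]; exact Finset.mem_filter.mpr ⟨Finset.mem_univ _, Or.inl haA⟩
    have hm1 : (⟨a - 1, h1⟩ : Fin n) ∈ W := by
      rw [hW]
      refine Finset.mem_filter.mpr ⟨Finset.mem_univ _, Or.inr ?_⟩
      show (a - 1) + 1 ∈ A
      rwa [Nat.sub_add_cancel (hA a haA)]
    rw [← hag ⟨⟨a, h2⟩, hm2⟩, ← hag ⟨⟨a - 1, h1⟩, hm1⟩]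
    exact hlt
  -- cardinality of W
  have hcardW : W.card ≤ K := by
    have h1 : W.card ≤ (A ∪ A.image (· - 1)).card := by
      refine Finset.card_le_card_of_injOn (fun x : Fin n => (x:ℕ)) ?_ ?_
      · intro x hx
        rw [hW] at hx
        rcases (Finset.mem_filter.mp hx).2 with h | h
        · exact Finset.mem_union_left _ h
        · refine Finset.mem_union_right _ (Finset.mem_image.mpr ⟨(x:ℕ)+1, h, rfl⟩)
      · exact fun a _ b _ hab => Fin.val_injective hab
    calc W.card ≤ (A ∪ A.image (· - 1)).card := h1
      _ ≤ A.card + (A.image (· - 1)).card := Finset.card_union_le _ _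
      _ ≤ A.card + A.card := by
          have := Finset.card_image_le (s := A) (f := (· - 1))
          omega
      _ = K := by rw [hK]; omega
  have hKW : (W.card : ℝ) ≤ (K : ℝ) := by exact_mod_cast hcardW
  -- bounds on the non-generic event for p
  have hinvpos : (0:ℝ) ≤ ((n:ℝ) - 1)⁻¹ := by
    have : (2:ℝ) ≤ (n:ℝ) := by exact_mod_cast hn
    have : (0:ℝ) < (n:ℝ) - 1 := by linarith
    positivity
  have hfixnn : 0 ≤ fix n := permProb_nonneg hp0 _
  have hpG : permProb (p n) (fun σ => ¬ ∀ x ∈ W, σ x ∉ W)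
      ≤ (K:ℝ) * (fix n + K * ((n:ℝ) - 1)⁻¹) := by
    refine le_trans (union_bound hp0 W) ?_
    have hinner : ∀ x ∈ W, ∑ y ∈ W, permProb (p n) (fun σ => σ x = y)
        ≤ fix n + (K:ℝ) * ((n:ℝ) - 1)⁻¹ := by
      intro x hx
      rw [← Finset.insert_erase hx, Finset.sum_insert (Finset.notMem_erase x W)]
      refine add_le_add ?_ ?_
      · rw [diag_eq hpinv x, hfixdef]
      · calc ∑ y ∈ W.erase x, permProb (p n) (fun σ => σ x = y)
            ≤ ∑ _y ∈ W.erase x, ((n:ℝ) - 1)⁻¹ := by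
              refine Finset.sum_le_sum fun y hy => ?_
              exact offdiag_bound hp0 hps hpinv (fun h => (Finset.mem_erase.mp hy).1 h.symm)
          _ = (W.erase x).card * ((n:ℝ) - 1)⁻¹ := by rw [Finset.sum_const, nsmul_eq_mul]
          _ ≤ (K:ℝ) * ((n:ℝ) - 1)⁻¹ := by
              refine mul_le_mul_of_nonneg_right ?_ hinvpos
              have : (W.erase x).card ≤ W.card := Finset.card_erase_le
              exact_mod_cast le_trans (Nat.cast_le.mpr this) hKW
    calc ∑ x ∈ W, ∑ y ∈ W, permProb (p n) (fun σ => σ x = y)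
        ≤ ∑ _x ∈ W, (fix n + (K:ℝ) * ((n:ℝ) - 1)⁻¹) := Finset.sum_le_sum hinner
      _ = W.card * (fix n + (K:ℝ) * ((n:ℝ) - 1)⁻¹) := by rw [Finset.sum_const, nsmul_eq_mul]
      _ ≤ (K:ℝ) * (fix n + (K:ℝ) * ((n:ℝ) - 1)⁻¹) := by
          refine mul_le_mul_of_nonneg_right hKW ?_
          positivity
  -- bound for the uniform measure
  have huG : permProb u (fun σ => ¬ ∀ x ∈ W, σ x ∉ W) ≤ (K:ℝ) * ((K:ℝ) * (n:ℝ)⁻¹) := by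
    refine le_trans (union_bound hq0 W) ?_
    have hnn : (0:ℝ) ≤ (n:ℝ)⁻¹ := by positivity
    calc ∑ x ∈ W, ∑ y ∈ W, permProb u (fun σ => σ x = y)
        = ∑ _x ∈ W, ∑ _y ∈ W, (n:ℝ)⁻¹ := by
          exact Finset.sum_congr rfl fun x _ => Finset.sum_congr rfl fun y _ =>
            uniform_val hn1 x y
      _ = (W.card : ℝ) * ((W.card : ℝ) * (n:ℝ)⁻¹) := by
          simp only [Finset.sum_const, nsmul_eq_mul]
          try ring
      _ ≤ (K:ℝ) * ((K:ℝ) * (n:ℝ)⁻¹) := by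
          refine mul_le_mul hKW (mul_le_mul_of_nonneg_right hKW hnn) (by positivity) ?_
          exact_mod_cast Nat.zero_le K
  -- the key bound
  have hkey := key_bound hp0 hq0 hps hqs hpinv hqinv W E hEdet
  rw [Real.norm_eq_abs]
  calc |permProb (p n) E - permProb u E|
      ≤ 2 * (permProb (p n) (fun σ => ¬ ∀ x ∈ W, σ x ∉ W)
           + permProb u (fun σ => ¬ ∀ x ∈ W, σ x ∉ W)) := hkey
    _ ≤ g n := by
        rw [hg]
        have := add_le_add hpG huG
        linarith
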